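/- Let F be a Borel probability measure on [0,1], let θ₁,…,θ_d > 0 with θ = Σ_i θ_i, and define the operator L on C²(Δ) by L g(x) = (1/2) Σ_{i,j=1}^d x_i(δ_{ij}−x_j) E[ ∂_i∂_j g( x(1−W)+WV e_i ) ] + (1/2) Σ_{i=1}^d (θ_i − θ x_i) ∂_i g(x), where Δ = {x ∈ [0,1]^d : Σ x_i ≤ 1}. If μ is a Borel probability measure on Δ such that ∫_Δ L g dμ = 0 for g(x) = x_i and g(x) = x_i x_j (all i,j), then ∫ x_i dμ = θ_i/θ and ∫ x_i x_j dμ = θ_i(θ_j + δ_{ij}) / ( θ(θ+1) ) for all i, j ∈ {1,…,d}, regardless of F. -/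

import Mathlib

open MeasureTheory Set

/-- Second partial derivative `∂_i ∂_j g` at `x`. -/
noncomputable def pd2 {d : ℕ} (g : (Fin d → ℝ) → ℝ) (i j : Fin d) (x : Fin d → ℝ) : ℝ :=
  fderiv ℝ (fun z => fderiv ℝ g z (Pi.single j 1)) x (Pi.single i 1)

/-- The `d`-dimensional Λ-Fleming-Viot generator with parent-independent mutation rates
`θ i`, in its Wright-Fisher representation: `W = U⬝Y`, `Y ∼ F`, `U` with density `2u` on
`(0,1)`, `V` uniform on `(0,1)`. -/
noncomputable def LopD {d : ℕ} (F : Measure ℝ) (θ : Fin d → ℝ)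
    (g : (Fin d → ℝ) → ℝ) (x : Fin d → ℝ) : ℝ :=
  (1/2) * ∑ i, ∑ j, x i * ((if i = j then 1 else 0) - x j) *
      (∫ y, (∫ u in Set.Ioo (0:ℝ) 1, (∫ v in Set.Ioo (0:ℝ) 1,
        pd2 g i j (fun k => x k * (1 - u * y) + if k = i then u * y * v else 0)) * (2 * u)) ∂F)
  + (1/2) * ∑ i, (θ i - (∑ t, θ t) * x i) * fderiv ℝ g x (Pi.single i 1)

section Helpers

variable {d : ℕ}

theorem pd2_lin (a i j : Fin d) (x : Fin d → ℝ) :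
    pd2 (fun z => z a) i j x = 0 := by
  unfold pd2
  have : (fun z : Fin d → ℝ => fderiv ℝ (fun z : Fin d → ℝ => z a) z (Pi.single j 1))
      = fun _ => (Pi.single j 1 : Fin d → ℝ) a := by
    funext z; rw [(hasFDerivAt_apply a z).fderiv]; rfl
  rw [this, fderiv_fun_const]
  rfl

theorem fderiv_mul_apply (a b i : Fin d) (x : Fin d → ℝ) :
    fderiv ℝ (fun z : Fin d → ℝ => z a * z b) x (Pi.single i 1)
      = x a * (Pi.single i 1 : Fin d → ℝ) b + x b * (Pi.single i 1 : Fin d → ℝ) a := by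
  rw [((hasFDerivAt_apply a x).fun_mul (hasFDerivAt_apply b x)).fderiv]; rfl

theorem pd2_mul (a b i j : Fin d) (x : Fin d → ℝ) :
    pd2 (fun z => z a * z b) i j x
      = (if b = j then (1:ℝ) else 0) * (if a = i then 1 else 0)
        + (if a = j then (1:ℝ) else 0) * (if b = i then 1 else 0) := by
  unfold pd2
  have h1 : (fun z : Fin d → ℝ => fderiv ℝ (fun z : Fin d → ℝ => z a * z b) z (Pi.single j 1))
      = fun z => z a * (Pi.single j 1 : Fin d → ℝ) b + z b * (Pi.single j 1 : Fin d → ℝ) a := by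
    funext z; exact fderiv_mul_apply a b j z
  rw [h1]
  have h2 : HasFDerivAt (fun z : Fin d → ℝ =>
        z a * (Pi.single j 1 : Fin d → ℝ) b + z b * (Pi.single j 1 : Fin d → ℝ) a)
      (((Pi.single j 1 : Fin d → ℝ) b : ℝ) • (ContinuousLinearMap.proj a : (Fin d → ℝ) →L[ℝ] ℝ)
        + ((Pi.single j 1 : Fin d → ℝ) a : ℝ) •
          (ContinuousLinearMap.proj b : (Fin d → ℝ) →L[ℝ] ℝ)) x :=
    ((hasFDerivAt_apply (𝕜 := ℝ) a x).mul_const ((Pi.single j 1 : Fin d → ℝ) b)).add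
      ((hasFDerivAt_apply (𝕜 := ℝ) b x).mul_const ((Pi.single j 1 : Fin d → ℝ) a))
  rw [h2.fderiv]
  rw [ContinuousLinearMap.add_apply, ContinuousLinearMap.smul_apply,
    ContinuousLinearMap.smul_apply, ContinuousLinearMap.proj_apply,
    ContinuousLinearMap.proj_apply]
  simp [Pi.single_apply]

theorem two_u_int : ∫ u in Set.Ioo (0:ℝ) 1, 2 * u = 1 := by
  rw [← integral_Ioc_eq_integral_Ioo]
  rw [← intervalIntegral.integral_of_le (by norm_num : (0:ℝ) ≤ 1)]
  rw [intervalIntegral.integral_const_mul, integral_id]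
  norm_num

theorem triple_const {F : Measure ℝ} [IsProbabilityMeasure F] (c : ℝ) :
    (∫ _y, (∫ u in Set.Ioo (0:ℝ) 1, (∫ _v in Set.Ioo (0:ℝ) 1, c) * (2 * u)) ∂F) = c := by
  have hv : (∫ _v in Set.Ioo (0:ℝ) 1, c) = c := by
    simp [Real.volume_Ioo]
  rw [hv]
  have hu : (∫ u in Set.Ioo (0:ℝ) 1, c * (2 * u)) = c := by
    rw [integral_const_mul, two_u_int, mul_one]
  rw [hu]
  simp

theorem LopD_lin (F : Measure ℝ) [IsProbabilityMeasure F] (θ : Fin d → ℝ) (a : Fin d)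
    (x : Fin d → ℝ) :
    LopD F θ (fun z => z a) x = (1/2) * (θ a - (∑ t, θ t) * x a) := by
  unfold LopD
  simp only [pd2_lin, integral_zero, zero_mul, mul_zero, Finset.sum_const_zero]
  have hfd : ∀ i : Fin d, fderiv ℝ (fun z : Fin d → ℝ => z a) x (Pi.single i 1)
      = if a = i then (1:ℝ) else 0 := by
    intro i
    rw [(hasFDerivAt_apply a x).fderiv, ContinuousLinearMap.proj_apply, Pi.single_apply]
  simp only [hfd, mul_ite, mul_one, mul_zero, Finset.sum_ite_eq, Finset.mem_univ, if_true]
  ring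

theorem sum_delta2 (p q : Fin d) (f : Fin d → Fin d → ℝ) :
    (∑ i, ∑ j, f i j * ((if q = j then (1:ℝ) else 0) * (if p = i then 1 else 0))) = f p q := by
  have h1 : ∀ i : Fin d, (∑ j, f i j * ((if q = j then (1:ℝ) else 0) * (if p = i then 1 else 0)))
      = f i q * (if p = i then 1 else 0) := by
    intro i
    rw [Finset.sum_eq_single q]
    · simp
    · intro j _ hj; simp [Ne.symm hj]
    · intro h; exact absurd (Finset.mem_univ q) h
  simp only [h1]
  rw [Finset.sum_eq_single p]
  · simp
  · intro i _ hi; simp [Ne.symm hi]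
  · intro h; exact absurd (Finset.mem_univ p) h

theorem sum_delta1 (p : Fin d) (g h : Fin d → ℝ) :
    (∑ i, g i * (h i * (if p = i then (1:ℝ) else 0))) = g p * h p := by
  rw [Finset.sum_eq_single p]
  · simp
  · intro i _ hi; simp [Ne.symm hi]
  · intro h; exact absurd (Finset.mem_univ p) h

theorem LopD_quad (F : Measure ℝ) [IsProbabilityMeasure F] (θ : Fin d → ℝ) (a b : Fin d)
    (x : Fin d → ℝ) :
    LopD F θ (fun z => z a * z b) x
      = (1/2) * ((if a = b then (1:ℝ) else 0) * (x a + x b) + θ a * x b + θ b * x a)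
        - (1 + (∑ t, θ t)) * (x a * x b) := by
  unfold LopD
  simp only [pd2_mul, triple_const]
  have hfd : ∀ i : Fin d, fderiv ℝ (fun z : Fin d → ℝ => z a * z b) x (Pi.single i 1)
      = x a * (if b = i then (1:ℝ) else 0) + x b * (if a = i then (1:ℝ) else 0) := by
    intro i
    rw [((hasFDerivAt_apply a x).fun_mul (hasFDerivAt_apply b x)).fderiv]
    show x a * (Pi.single i 1 : Fin d → ℝ) b + x b * (Pi.single i 1 : Fin d → ℝ) a = _
    rw [Pi.single_apply, Pi.single_apply]
  simp only [hfd, mul_add, Finset.sum_add_distrib]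
  rw [sum_delta2 a b (fun i j => x i * ((if i = j then 1 else 0) - x j)),
    sum_delta2 b a (fun i j => x i * ((if i = j then 1 else 0) - x j)),
    sum_delta1 b (fun i => θ i - (∑ t, θ t) * x i) (fun _ => x a),
    sum_delta1 a (fun i => θ i - (∑ t, θ t) * x i) (fun _ => x b)]
  by_cases hab : a = b
  · subst hab; simp; ring
  · simp [hab, Ne.symm hab]; ring

theorem int3 {X : Type*} [MeasurableSpace X] (μ : Measure X) (f g h : X → ℝ)
    (hf : Integrable f μ) (hg : Integrable g μ) (hh : Integrable h μ) (c1 c2 c3 : ℝ) :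
    ∫ x, (c1 * f x + c2 * g x + c3 * h x) ∂μ
      = c1 * ∫ x, f x ∂μ + c2 * ∫ x, g x ∂μ + c3 * ∫ x, h x ∂μ := by
  have hfg : Integrable (fun x => c1 * f x + c2 * g x) μ :=
    (hf.const_mul c1).add (hg.const_mul c2)
  rw [integral_add hfg (hh.const_mul c3), integral_add (hf.const_mul c1) (hg.const_mul c2),
    integral_const_mul, integral_const_mul, integral_const_mul]

theorem int1 {X : Type*} [MeasurableSpace X] (μ : Measure X) [IsProbabilityMeasure μ]
    (f : X → ℝ) (hf : Integrable f μ) (c0 c1 : ℝ) :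
    ∫ x, (c0 + c1 * f x) ∂μ = c0 + c1 * ∫ x, f x ∂μ := by
  rw [integral_add (integrable_const c0) (hf.const_mul c1), integral_const, integral_const_mul]
  simp

end Helpers

/-- the first and second moments of any stationary distribution of the
Λ-Fleming-Viot process with parent-independent mutation coincide with the Dirichlet
moments, regardless of `F`. -/
theorem stmt11 {d : ℕ} (F : Measure ℝ) [IsProbabilityMeasure F]
    (hF : F (Set.Icc (0:ℝ) 1)ᶜ = 0)
    (θ : Fin d → ℝ) (hθ : ∀ i, 0 < θ i)
    (μ : Measure (Fin d → ℝ)) [IsProbabilityMeasure μ]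
    (hμ : μ {x | (∀ i, 0 ≤ x i ∧ x i ≤ 1) ∧ ∑ i, x i ≤ 1}ᶜ = 0)
    (h1 : ∀ i, ∫ x, LopD F θ (fun z => z i) x ∂μ = 0)
    (h2 : ∀ i j, ∫ x, LopD F θ (fun z => z i * z j) x ∂μ = 0) :
    (∀ i, ∫ x, x i ∂μ = θ i / (∑ t, θ t)) ∧
    (∀ i j, ∫ x, x i * x j ∂μ
        = θ i * (θ j + if i = j then 1 else 0) / ((∑ t, θ t) * ((∑ t, θ t) + 1))) := by
  set T : ℝ := ∑ t, θ t with hTdef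
  have hae : ∀ᵐ x ∂μ, (∀ i, 0 ≤ x i ∧ x i ≤ 1) ∧ ∑ i, x i ≤ 1 := by
    rw [ae_iff]
    exact hμ
  have hInt1 : ∀ a : Fin d, Integrable (fun x : Fin d → ℝ => x a) μ := by
    intro a
    refine (integrable_const (1:ℝ)).mono' (measurable_pi_apply a).aestronglyMeasurable ?_
    filter_upwards [hae] with x hx
    rw [Real.norm_eq_abs, abs_le]
    exact ⟨by linarith [(hx.1 a).1], (hx.1 a).2⟩
  have hInt2 : ∀ a b : Fin d, Integrable (fun x : Fin d → ℝ => x a * x b) μ := by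
    intro a b
    refine (integrable_const (1:ℝ)).mono'
      (((measurable_pi_apply a).mul (measurable_pi_apply b)).aestronglyMeasurable) ?_
    filter_upwards [hae] with x hx
    rw [Real.norm_eq_abs, abs_mul]
    calc |x a| * |x b| ≤ 1 * 1 := by
          apply mul_le_mul
          · rw [abs_le]; exact ⟨by linarith [(hx.1 a).1], (hx.1 a).2⟩
          · rw [abs_le]; exact ⟨by linarith [(hx.1 b).1], (hx.1 b).2⟩
          · exact abs_nonneg _
          · norm_num
      _ = 1 := by norm_num
  have hT : ∀ a : Fin d, 0 < T := by
    intro a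
    have h1 : θ a ≤ T := Finset.single_le_sum (fun t _ => (hθ t).le) (Finset.mem_univ a)
    linarith [hθ a]
  have hm : ∀ a : Fin d, ∫ x, x a ∂μ = θ a / T := by
    intro a
    have h := h1 a
    have hpt : ∀ x : Fin d → ℝ, LopD F θ (fun z => z a) x = θ a / 2 + (-T/2) * x a := by
      intro x; rw [LopD_lin]; ring
    rw [show (fun x : Fin d → ℝ => LopD F θ (fun z => z a) x)
        = fun x => θ a / 2 + (-T/2) * x a from funext hpt] at h
    rw [int1 μ _ (hInt1 a)] at h
    have hT' := hT a
    field_simp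
    linarith
  constructor
  · exact hm
  · intro a b
    have h := h2 a b
    have hT' := hT a
    have hpt : ∀ x : Fin d → ℝ, LopD F θ (fun z => z a * z b) x
        = ((if a = b then (1:ℝ) else 0)/2 + θ b/2) * x a
          + ((if a = b then (1:ℝ) else 0)/2 + θ a/2) * x b
          + (-(1 + T)) * (x a * x b) := by
      intro x; rw [LopD_quad]; ring
    rw [show (fun x : Fin d → ℝ => LopD F θ (fun z => z a * z b) x)
        = fun x => ((if a = b then (1:ℝ) else 0)/2 + θ b/2) * x a
          + ((if a = b then (1:ℝ) else 0)/2 + θ a/2) * x b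
          + (-(1 + T)) * (x a * x b) from funext hpt] at h
    rw [int3 μ _ _ _ (hInt1 a) (hInt1 b) (hInt2 a b), hm a, hm b] at h
    by_cases hab : a = b
    · subst hab
      simp only [if_pos rfl] at h ⊢
      have hne : T ≠ 0 := ne_of_gt hT'
      have hne1 : T + 1 ≠ 0 := by linarith
      field_simp at h ⊢
      linarith
    · simp only [if_neg hab] at h ⊢
      have hne : T ≠ 0 := ne_of_gt hT'
      have hne1 : T + 1 ≠ 0 := by linarith
      field_simp at h ⊢
      linarith
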